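/- Fix an initial state x ∈ ℝ^n, weights w₁, w₂ ≥ 0, and a horizon N. Then the set of achievable objective values coincides for the robust and the certified formulations; in particular sup{ w₁ μ − w₂ ε : μ ≥ 0, ε ≥ 0, and there exist α₁ ∈ ℝ^{m×n}, α₂ ∈ ℝ^m such that for every disturbance sequence d(0), …, d(N−1) with ‖d(i)‖∞ ≤ μ, the closed-loop trajectory x(0) = x, x(k+1) = A_k x(k) + B_k (α₁ x(k) + α₂) + d(k) satisfies G_k x(k) ≤ H_k for all k = 0, …, N and ‖α₁ x(k) + α₂‖∞ ≤ ε for all k = 0, …, N−1 } = sup{ w₁ μ − w₂ ε : μ ≥ 0, ε ≥ 0, and there exist α₁ ∈ ℝ^{m×n}, α₂ ∈ ℝ^m and a nonnegative matrix P ∈ ℝ^{((N+1)q + 2mN) × 2n(N+1)} with P A_b = μ E^{cl}(α₁) and P B_b ≤ F^{cl}(x, α₁, α₂, ε) }. -/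

import Mathlib

open Matrix Finset

noncomputable section

/-- Ordered product `M (k-1) * M (k-2) * ⋯ * M i` (empty product = identity when `k ≤ i`). -/
def mprod {n : ℕ} (M : ℕ → Matrix (Fin n) (Fin n) ℝ) (i k : ℕ) :
    Matrix (Fin n) (Fin n) ℝ :=
  (((List.range' i (k - i)).reverse).map M).prod

def Abar {n m : ℕ} (A : ℕ → Matrix (Fin n) (Fin n) ℝ) (B : ℕ → Matrix (Fin n) (Fin m) ℝ)
    (α₁ : Matrix (Fin m) (Fin n) ℝ) (j : ℕ) : Matrix (Fin n) (Fin n) ℝ :=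
  A j + B j * α₁

def trajCL {n m : ℕ} (A : ℕ → Matrix (Fin n) (Fin n) ℝ) (B : ℕ → Matrix (Fin n) (Fin m) ℝ)
    (α₁ : Matrix (Fin m) (Fin n) ℝ) (α₂ : Fin m → ℝ) (d : ℕ → Fin n → ℝ)
    (x0 : Fin n → ℝ) : ℕ → Fin n → ℝ
  | 0 => x0
  | k + 1 =>
      (A k).mulVec (trajCL A B α₁ α₂ d x0 k)
        + (B k).mulVec (α₁.mulVec (trajCL A B α₁ α₂ d x0 k) + α₂) + d k

def Eblk {n : ℕ} (N : ℕ) (M : ℕ → Matrix (Fin n) (Fin n) ℝ) (k : ℕ) :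
    Matrix (Fin n) (Fin (N + 1) × Fin n) ℝ :=
  Matrix.of fun r jc =>
    if 1 ≤ (jc.1 : ℕ) ∧ (jc.1 : ℕ) ≤ k then mprod M (jc.1 : ℕ) k r jc.2 else 0

def Fblk {n m : ℕ} (A : ℕ → Matrix (Fin n) (Fin n) ℝ) (B : ℕ → Matrix (Fin n) (Fin m) ℝ)
    (α₁ : Matrix (Fin m) (Fin n) ℝ) (α₂ : Fin m → ℝ) (x : Fin n → ℝ) (k : ℕ) : Fin n → ℝ :=
  (mprod (Abar A B α₁) 0 k).mulVec x
    + ∑ i ∈ Finset.range k, (mprod (Abar A B α₁) (i + 1) k * B i).mulVec α₂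

def Ex {n m q : ℕ} (N : ℕ) (A : ℕ → Matrix (Fin n) (Fin n) ℝ)
    (B : ℕ → Matrix (Fin n) (Fin m) ℝ) (G : ℕ → Matrix (Fin q) (Fin n) ℝ)
    (α₁ : Matrix (Fin m) (Fin n) ℝ) :
    Matrix (Fin (N + 1) × Fin q) (Fin (N + 1) × Fin n) ℝ :=
  Matrix.of fun kr jc => (G (kr.1 : ℕ) * Eblk N (Abar A B α₁) (kr.1 : ℕ)) kr.2 jc

def Fx {n m q : ℕ} (N : ℕ) (A : ℕ → Matrix (Fin n) (Fin n) ℝ)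
    (B : ℕ → Matrix (Fin n) (Fin m) ℝ) (G : ℕ → Matrix (Fin q) (Fin n) ℝ)
    (H : ℕ → Fin q → ℝ) (α₁ : Matrix (Fin m) (Fin n) ℝ) (α₂ : Fin m → ℝ)
    (x : Fin n → ℝ) : Fin (N + 1) × Fin q → ℝ :=
  fun kr => H (kr.1 : ℕ) kr.2 - (G (kr.1 : ℕ)).mulVec (Fblk A B α₁ α₂ x (kr.1 : ℕ)) kr.2

def Au (m : ℕ) : Matrix (Fin m ⊕ Fin m) (Fin m) ℝ := Matrix.fromRows 1 (-1)

def Sk {n m : ℕ} (A : ℕ → Matrix (Fin n) (Fin n) ℝ) (B : ℕ → Matrix (Fin n) (Fin m) ℝ)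
    (α₁ : Matrix (Fin m) (Fin n) ℝ) (α₂ : Fin m → ℝ) (x : Fin n → ℝ) (k : ℕ) : Fin m → ℝ :=
  α₁.mulVec (Fblk A B α₁ α₂ x k) + α₂

def Ecl {n m q : ℕ} (N : ℕ) (A : ℕ → Matrix (Fin n) (Fin n) ℝ)
    (B : ℕ → Matrix (Fin n) (Fin m) ℝ) (G : ℕ → Matrix (Fin q) (Fin n) ℝ)
    (α₁ : Matrix (Fin m) (Fin n) ℝ) :
    Matrix ((Fin (N + 1) × Fin q) ⊕ (Fin N × (Fin m ⊕ Fin m))) (Fin (N + 1) × Fin n) ℝ :=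
  Matrix.fromRows (Ex N A B G α₁)
    (Matrix.of fun kr jc => (Au m * α₁ * Eblk N (Abar A B α₁) (kr.1 : ℕ)) kr.2 jc)

def Fcl {n m q : ℕ} (N : ℕ) (A : ℕ → Matrix (Fin n) (Fin n) ℝ)
    (B : ℕ → Matrix (Fin n) (Fin m) ℝ) (G : ℕ → Matrix (Fin q) (Fin n) ℝ)
    (H : ℕ → Fin q → ℝ) (α₁ : Matrix (Fin m) (Fin n) ℝ) (α₂ : Fin m → ℝ)
    (x : Fin n → ℝ) (ε : ℝ) : (Fin (N + 1) × Fin q) ⊕ (Fin N × (Fin m ⊕ Fin m)) → ℝ :=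
  Sum.elim (Fx N A B G H α₁ α₂ x)
    (fun kr => ε - (Au m).mulVec (Sk A B α₁ α₂ x (kr.1 : ℕ)) kr.2)

def AbM (N n : ℕ) :
    Matrix ((Fin (N + 1) × Fin n) ⊕ (Fin (N + 1) × Fin n)) (Fin (N + 1) × Fin n) ℝ :=
  Matrix.fromRows 1 (-1)

def BbV (N n : ℕ) : (Fin (N + 1) × Fin n) ⊕ (Fin (N + 1) × Fin n) → ℝ := fun _ => 1

def trajOL {n m : ℕ} (A : ℕ → Matrix (Fin n) (Fin n) ℝ) (B : ℕ → Matrix (Fin n) (Fin m) ℝ)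
    (u : ℕ → Fin m → ℝ) (d : ℕ → Fin n → ℝ) (x0 : Fin n → ℝ) : ℕ → Fin n → ℝ
  | 0 => x0
  | k + 1 => (A k).mulVec (trajOL A B u d x0 k) + (B k).mulVec (u k) + d k

def Eol {n q : ℕ} (N : ℕ) (A : ℕ → Matrix (Fin n) (Fin n) ℝ)
    (G : ℕ → Matrix (Fin q) (Fin n) ℝ) :
    Matrix (Fin (N + 1) × Fin q) (Fin (N + 1) × Fin n) ℝ :=
  Matrix.of fun kr jc => (G (kr.1 : ℕ) * Eblk N A (kr.1 : ℕ)) kr.2 jc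

def Fol {n m q : ℕ} (N : ℕ) (A : ℕ → Matrix (Fin n) (Fin n) ℝ)
    (B : ℕ → Matrix (Fin n) (Fin m) ℝ) (G : ℕ → Matrix (Fin q) (Fin n) ℝ)
    (H : ℕ → Fin q → ℝ) (x : Fin n → ℝ) (ut : ℕ → Fin m → ℝ) (ε : ℝ) :
    Fin (N + 1) × Fin q → ℝ :=
  fun kr => H (kr.1 : ℕ) kr.2
    - (G (kr.1 : ℕ)).mulVec ((mprod A 0 (kr.1 : ℕ)).mulVec x) kr.2
    - ε * (G (kr.1 : ℕ)).mulVec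
        (∑ i ∈ Finset.range (kr.1 : ℕ), (mprod A (i + 1) (kr.1 : ℕ) * B i).mulVec (ut i)) kr.2

section AuxLemmas

variable {n m q N : ℕ}

lemma mprod_self (M : ℕ → Matrix (Fin n) (Fin n) ℝ) (k : ℕ) : mprod M k k = 1 := by
  simp [mprod]

lemma mprod_succ (M : ℕ → Matrix (Fin n) (Fin n) ℝ) {i k : ℕ} (h : i ≤ k) :
    mprod M i (k + 1) = M k * mprod M i k := by
  have h1 : k + 1 - i = (k - i) + 1 := by omega
  have h2 : i + 1 * (k - i) = k := by omega
  rw [mprod, h1, List.range'_concat, h2]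
  simp [mprod]

lemma mulVec_sumv {a b : ℕ} (M : Matrix (Fin a) (Fin b) ℝ) (s : Finset ℕ)
    (f : ℕ → Fin b → ℝ) : M *ᵥ (∑ i ∈ s, f i) = ∑ i ∈ s, M *ᵥ f i := by
  classical
  induction s using Finset.induction with
  | empty => simp
  | insert _ _ h ih => rw [Finset.sum_insert h, Finset.sum_insert h, Matrix.mulVec_add, ih]

lemma traj_expand (A : ℕ → Matrix (Fin n) (Fin n) ℝ) (B : ℕ → Matrix (Fin n) (Fin m) ℝ)
    (α₁ : Matrix (Fin m) (Fin n) ℝ) (α₂ : Fin m → ℝ) (d : ℕ → Fin n → ℝ)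
    (x : Fin n → ℝ) (k : ℕ) :
    trajCL A B α₁ α₂ d x k = Fblk A B α₁ α₂ x k
      + ∑ i ∈ Finset.range k, (mprod (Abar A B α₁) (i + 1) k) *ᵥ (d i) := by
  induction k with
  | zero => simp [trajCL, Fblk, mprod]
  | succ k ih =>
    have hd : trajCL A B α₁ α₂ d x (k + 1)
        = Abar A B α₁ k *ᵥ trajCL A B α₁ α₂ d x k + B k *ᵥ α₂ + d k := by
      simp only [trajCL, Abar, Matrix.add_mulVec, Matrix.mulVec_add,
        ← Matrix.mulVec_mulVec]
      abel
    have claim1 : Fblk A B α₁ α₂ x (k + 1)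
        = Abar A B α₁ k *ᵥ Fblk A B α₁ α₂ x k + B k *ᵥ α₂ := by
      have e : ∀ i ∈ Finset.range k, (mprod (Abar A B α₁) (i + 1) (k + 1) * B i) *ᵥ α₂
          = Abar A B α₁ k *ᵥ ((mprod (Abar A B α₁) (i + 1) k * B i) *ᵥ α₂) := by
        intro i hi
        rw [mprod_succ _ (by have := Finset.mem_range.1 hi; omega : i + 1 ≤ k),
          Matrix.mul_assoc, ← Matrix.mulVec_mulVec]
      rw [Fblk, Fblk, Finset.sum_range_succ, mprod_succ _ (Nat.zero_le k),
        mprod_self, Matrix.one_mul, Finset.sum_congr rfl e]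
      simp only [Matrix.mulVec_add, mulVec_sumv, ← Matrix.mulVec_mulVec]
      abel
    have claim2 : (∑ i ∈ Finset.range (k + 1), (mprod (Abar A B α₁) (i + 1) (k + 1)) *ᵥ (d i))
        = Abar A B α₁ k *ᵥ (∑ i ∈ Finset.range k, (mprod (Abar A B α₁) (i + 1) k) *ᵥ (d i))
          + d k := by
      have e : ∀ i ∈ Finset.range k, (mprod (Abar A B α₁) (i + 1) (k + 1)) *ᵥ d i
          = Abar A B α₁ k *ᵥ ((mprod (Abar A B α₁) (i + 1) k) *ᵥ d i) := by
        intro i hi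
        rw [mprod_succ _ (by have := Finset.mem_range.1 hi; omega : i + 1 ≤ k),
          ← Matrix.mulVec_mulVec]
      rw [Finset.sum_range_succ, mprod_self, Matrix.one_mulVec, Finset.sum_congr rfl e,
        ← mulVec_sumv]
    rw [hd, ih, claim1, claim2, Matrix.mulVec_add]
    abel

lemma Eblk_mulVec (M : ℕ → Matrix (Fin n) (Fin n) ℝ) {k : ℕ} (hk : k ≤ N)
    (D : Fin (N + 1) × Fin n → ℝ) (d : ℕ → Fin n → ℝ)
    (hD : ∀ i (h : i < N), (fun c => D (⟨i + 1, Nat.succ_lt_succ h⟩, c)) = d i) :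
    (Eblk N M k) *ᵥ D = ∑ i ∈ Finset.range k, (mprod M (i + 1) k) *ᵥ d i := by
  classical
  funext r
  set bD : ℕ → Fin n → ℝ :=
    fun jn c => if hj : jn < N + 1 then D (⟨jn, hj⟩, c) else 0 with hbDdef
  have hbD : ∀ (j : Fin (N + 1)) (c : Fin n), bD (j : ℕ) c = D (j, c) := by
    intro j c
    rw [hbDdef]
    simp only [dif_pos j.isLt, Fin.eta]
  have hbd : ∀ i, i < N → bD (i + 1) = d i := by
    intro i hi
    funext c
    rw [hbDdef]
    simp only [dif_pos (Nat.succ_lt_succ hi)]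
    exact congrFun (hD i hi) c
  set g : ℕ → ℝ :=
    fun jn => if 1 ≤ jn ∧ jn ≤ k then (mprod M jn k *ᵥ bD jn) r else 0 with hgdef
  have hg : ∀ j : Fin (N + 1), (∑ c, (Eblk N M k) r (j, c) * D (j, c)) = g (j : ℕ) := by
    intro j
    rw [hgdef]
    by_cases hc : 1 ≤ (j : ℕ) ∧ (j : ℕ) ≤ k
    · simp only [if_pos hc, Eblk, Matrix.of_apply, Matrix.mulVec, dotProduct]
      exact Finset.sum_congr rfl fun c _ => by rw [hbD j c]
    · simp only [if_neg hc, Eblk, Matrix.of_apply, zero_mul, Finset.sum_const_zero]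
  have step1 : ((Eblk N M k) *ᵥ D) r = ∑ j : Fin (N + 1), g (j : ℕ) := by
    rw [Matrix.mulVec, dotProduct, Fintype.sum_prod_type]
    exact Finset.sum_congr rfl fun j _ => hg j
  have step2 : ∑ j ∈ Finset.Ico 1 (k + 1), g j = ∑ j ∈ Finset.range (N + 1), g j := by
    refine Finset.sum_subset
      (fun j hj => Finset.mem_range.2 (by rw [Finset.mem_Ico] at hj; omega)) ?_
    intro j hj hnj
    rw [Finset.mem_range] at hj
    rw [Finset.mem_Ico] at hnj
    rw [hgdef]
    exact if_neg (by omega)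
  rw [step1, Fin.sum_univ_eq_sum_range g (N + 1), ← step2, Finset.sum_Ico_eq_sum_range]
  simp only [Nat.add_sub_cancel]
  rw [Finset.sum_apply]
  refine Finset.sum_congr rfl fun i hi => ?_
  have hi' : i < k := Finset.mem_range.1 hi
  rw [hgdef]
  have : (1 : ℕ) + i = i + 1 := Nat.add_comm 1 i
  rw [this]
  simp only [if_pos (show 1 ≤ i + 1 ∧ i + 1 ≤ k by omega), hbd i (show i < N by omega)]

lemma Au_mulVec (v : Fin m → ℝ) : (Au m) *ᵥ v = Sum.elim v (-v) := by
  rw [Au, Matrix.fromRows_mulVec, Matrix.one_mulVec, Matrix.neg_mulVec, Matrix.one_mulVec]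

lemma AbM_mulVec (D : Fin (N + 1) × Fin n → ℝ) : (AbM N n) *ᵥ D = Sum.elim D (-D) := by
  rw [AbM, Matrix.fromRows_mulVec, Matrix.one_mulVec, Matrix.neg_mulVec, Matrix.one_mulVec]

lemma Ecl_mulVec_inl (A : ℕ → Matrix (Fin n) (Fin n) ℝ) (B : ℕ → Matrix (Fin n) (Fin m) ℝ)
    (G : ℕ → Matrix (Fin q) (Fin n) ℝ) (α₁ : Matrix (Fin m) (Fin n) ℝ)
    (D : Fin (N + 1) × Fin n → ℝ) (kr : Fin (N + 1) × Fin q) :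
    ((Ecl N A B G α₁) *ᵥ D) (Sum.inl kr)
      = ((G (kr.1 : ℕ)) *ᵥ ((Eblk N (Abar A B α₁) (kr.1 : ℕ)) *ᵥ D)) kr.2 := by
  rw [Matrix.mulVec_mulVec]; rfl

lemma Ecl_mulVec_inr (A : ℕ → Matrix (Fin n) (Fin n) ℝ) (B : ℕ → Matrix (Fin n) (Fin m) ℝ)
    (G : ℕ → Matrix (Fin q) (Fin n) ℝ) (α₁ : Matrix (Fin m) (Fin n) ℝ)
    (D : Fin (N + 1) × Fin n → ℝ) (kr : Fin N × (Fin m ⊕ Fin m)) :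
    ((Ecl N A B G α₁) *ᵥ D) (Sum.inr kr)
      = ((Au m) *ᵥ (α₁ *ᵥ ((Eblk N (Abar A B α₁) (kr.1 : ℕ)) *ᵥ D))) kr.2 := by
  rw [Matrix.mulVec_mulVec, Matrix.mulVec_mulVec]; rfl

lemma max_sub_max (a : ℝ) : max a 0 - max (-a) 0 = a := by
  rcases le_total 0 a with h | h
  · rw [max_eq_left h, max_eq_right (neg_nonpos.2 h)]; ring
  · rw [max_eq_right h, max_eq_left (neg_nonneg.2 h)]; ring

lemma max_add_max (a : ℝ) : max a 0 + max (-a) 0 = |a| := by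
  rcases le_total 0 a with h | h
  · rw [max_eq_left h, max_eq_right (neg_nonpos.2 h), abs_of_nonneg h]; ring
  · rw [max_eq_right h, max_eq_left (neg_nonneg.2 h), abs_of_nonpos h]; ring

lemma key_iff (A : ℕ → Matrix (Fin n) (Fin n) ℝ) (B : ℕ → Matrix (Fin n) (Fin m) ℝ)
    (G : ℕ → Matrix (Fin q) (Fin n) ℝ) (H : ℕ → Fin q → ℝ)
    (α₁ : Matrix (Fin m) (Fin n) ℝ) (α₂ : Fin m → ℝ) (x : Fin n → ℝ) {ε : ℝ} (hε : 0 ≤ ε)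
    (d : ℕ → Fin n → ℝ) (D : Fin (N + 1) × Fin n → ℝ)
    (hD : ∀ i (h : i < N), (fun c => D (⟨i + 1, Nat.succ_lt_succ h⟩, c)) = d i) :
    ((Ecl N A B G α₁) *ᵥ D ≤ Fcl N A B G H α₁ α₂ x ε) ↔
    ((∀ k, k ≤ N → (G k) *ᵥ (trajCL A B α₁ α₂ d x k) ≤ H k) ∧
     (∀ k, k < N → ‖α₁ *ᵥ (trajCL A B α₁ α₂ d x k) + α₂‖ ≤ ε)) := by
  have htraj : ∀ k, k ≤ N → (Eblk N (Abar A B α₁) k) *ᵥ D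
      = trajCL A B α₁ α₂ d x k - Fblk A B α₁ α₂ x k := by
    intro k hk
    rw [Eblk_mulVec _ hk D d hD, traj_expand A B α₁ α₂ d x k]
    abel
  have hstateq : ∀ (kf : Fin (N + 1)) (r : Fin q),
      (Ecl N A B G α₁ *ᵥ D) (Sum.inl (kf, r))
        = ((G (kf : ℕ)) *ᵥ trajCL A B α₁ α₂ d x (kf : ℕ)) r
          - ((G (kf : ℕ)) *ᵥ Fblk A B α₁ α₂ x (kf : ℕ)) r := by
    intro kf r
    rw [Ecl_mulVec_inl, htraj _ (by have := kf.isLt; omega), Matrix.mulVec_sub]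
    rfl
  have hFclinl : ∀ (kf : Fin (N + 1)) (r : Fin q),
      Fcl N A B G H α₁ α₂ x ε (Sum.inl (kf, r))
        = H (kf : ℕ) r - ((G (kf : ℕ)) *ᵥ Fblk A B α₁ α₂ x (kf : ℕ)) r := fun _ _ => rfl
  have hinputq : ∀ (kf : Fin N) (s : Fin m ⊕ Fin m),
      (Ecl N A B G α₁ *ᵥ D) (Sum.inr (kf, s))
        = Sum.elim (α₁ *ᵥ trajCL A B α₁ α₂ d x (kf : ℕ) + α₂ - Sk A B α₁ α₂ x (kf : ℕ))
            (-(α₁ *ᵥ trajCL A B α₁ α₂ d x (kf : ℕ) + α₂ - Sk A B α₁ α₂ x (kf : ℕ))) s := by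
    intro kf s
    rw [Ecl_mulVec_inr, htraj _ (le_of_lt kf.isLt), Matrix.mulVec_sub]
    have : α₁ *ᵥ trajCL A B α₁ α₂ d x (kf : ℕ) - α₁ *ᵥ Fblk A B α₁ α₂ x (kf : ℕ)
        = α₁ *ᵥ trajCL A B α₁ α₂ d x (kf : ℕ) + α₂ - Sk A B α₁ α₂ x (kf : ℕ) := by
      rw [Sk]; abel
    rw [this, Au_mulVec]
  have hFclinr : ∀ (kf : Fin N) (s : Fin m ⊕ Fin m),
      Fcl N A B G H α₁ α₂ x ε (Sum.inr (kf, s))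
        = ε - Sum.elim (Sk A B α₁ α₂ x (kf : ℕ)) (-(Sk A B α₁ α₂ x (kf : ℕ))) s := by
    intro kf s
    show ε - ((Au m) *ᵥ Sk A B α₁ α₂ x (kf : ℕ)) s = _
    rw [Au_mulVec]
  constructor
  · intro h
    constructor
    · intro k hk r
      have hkf : k < N + 1 := by omega
      have h1 := h (Sum.inl (⟨k, hkf⟩, r))
      rw [hstateq, hFclinl] at h1
      have h1' : ((G k) *ᵥ trajCL A B α₁ α₂ d x k) r
          - ((G k) *ᵥ Fblk A B α₁ α₂ x k) r
          ≤ H k r - ((G k) *ᵥ Fblk A B α₁ α₂ x k) r := h1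
      linarith
    · intro k hk
      rw [pi_norm_le_iff_of_nonneg hε]
      intro s
      rw [Real.norm_eq_abs, abs_le]
      have h1 := h (Sum.inr (⟨k, hk⟩, Sum.inl s))
      have h2 := h (Sum.inr (⟨k, hk⟩, Sum.inr s))
      rw [hinputq, hFclinr] at h1 h2
      simp only [Sum.elim_inl, Sum.elim_inr, Pi.sub_apply, Pi.add_apply, Pi.neg_apply] at h1 h2
      have h1' : (α₁ *ᵥ trajCL A B α₁ α₂ d x k) s + α₂ s - Sk A B α₁ α₂ x k s
          ≤ ε - Sk A B α₁ α₂ x k s := h1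
      have h2' : -((α₁ *ᵥ trajCL A B α₁ α₂ d x k) s + α₂ s - Sk A B α₁ α₂ x k s)
          ≤ ε - -(Sk A B α₁ α₂ x k s) := h2
      constructor
      · simp only [Pi.add_apply]; linarith
      · simp only [Pi.add_apply]; linarith
  · rintro ⟨h1, h2⟩ i
    rcases i with ⟨kf, r⟩ | ⟨kf, s⟩
    · rw [hstateq, hFclinl]
      have := h1 (kf : ℕ) (by have := kf.isLt; omega) r
      linarith [this]
    · have hb0 := (pi_norm_le_iff_of_nonneg hε).1 (h2 (kf : ℕ) kf.isLt)
      rw [hinputq, hFclinr]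
      rcases s with s | s
      · have hb := hb0 s
        rw [Real.norm_eq_abs, abs_le] at hb
        simp only [Pi.add_apply] at hb
        simp only [Sum.elim_inl, Pi.sub_apply, Pi.add_apply]
        linarith [hb.2]
      · have hb := hb0 s
        rw [Real.norm_eq_abs, abs_le] at hb
        simp only [Pi.add_apply] at hb
        simp only [Sum.elim_inr, Pi.sub_apply, Pi.add_apply, Pi.neg_apply]
        linarith [hb.1]

end AuxLemmas

/-- Pareto trade-off between resilience and effort for the closed-loop LTV system:
the supremum of `w₁ μ - w₂ ε` over the robust formulation equals the supremum over the
Farkas-certified formulation. -/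
theorem pareto_closedLoop {n m q N : ℕ}
    (A : ℕ → Matrix (Fin n) (Fin n) ℝ) (B : ℕ → Matrix (Fin n) (Fin m) ℝ)
    (G : ℕ → Matrix (Fin q) (Fin n) ℝ) (H : ℕ → Fin q → ℝ)
    (x : Fin n → ℝ) (w₁ w₂ : ℝ) (hw₁ : 0 ≤ w₁) (hw₂ : 0 ≤ w₂) :
    sSup {v : ℝ | ∃ (μ ε : ℝ) (α₁ : Matrix (Fin m) (Fin n) ℝ) (α₂ : Fin m → ℝ),
        0 ≤ μ ∧ 0 ≤ ε ∧ v = w₁ * μ - w₂ * ε ∧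
        ∀ d : ℕ → Fin n → ℝ, (∀ i, i < N → ‖d i‖ ≤ μ) →
          (∀ k, k ≤ N → (G k).mulVec (trajCL A B α₁ α₂ d x k) ≤ H k) ∧
          (∀ k, k < N → ‖α₁.mulVec (trajCL A B α₁ α₂ d x k) + α₂‖ ≤ ε)} =
    sSup {v : ℝ | ∃ (μ ε : ℝ) (α₁ : Matrix (Fin m) (Fin n) ℝ) (α₂ : Fin m → ℝ)
        (P : Matrix ((Fin (N + 1) × Fin q) ⊕ (Fin N × (Fin m ⊕ Fin m)))
          ((Fin (N + 1) × Fin n) ⊕ (Fin (N + 1) × Fin n)) ℝ),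
        0 ≤ μ ∧ 0 ≤ ε ∧ v = w₁ * μ - w₂ * ε ∧
        (∀ i j, 0 ≤ P i j) ∧
        P * AbM N n = μ • Ecl N A B G α₁ ∧
        P.mulVec (BbV N n) ≤ Fcl N A B G H α₁ α₂ x ε} := by
  congr 1
  ext v
  simp only [Set.mem_setOf_eq]
  constructor
  · rintro ⟨μ, ε, α₁, α₂, hμ, hε, hv, hrob⟩
    classical
    set E := Ecl N A B G α₁ with hE
    set P : Matrix ((Fin (N + 1) × Fin q) ⊕ (Fin N × (Fin m ⊕ Fin m)))
        ((Fin (N + 1) × Fin n) ⊕ (Fin (N + 1) × Fin n)) ℝ :=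
      Matrix.of fun i jb =>
        Sum.elim (fun j => μ * max (E i j) 0) (fun j => μ * max (-(E i j)) 0) jb with hPdef
    refine ⟨μ, ε, α₁, α₂, P, hμ, hε, hv, ?_, ?_, ?_⟩
    · rintro i (j | j) <;>
        exact mul_nonneg hμ (le_max_right _ _)
    · ext i j
      rw [Matrix.mul_apply, Fintype.sum_sum_type]
      have hA1 : ∀ a, AbM N n (Sum.inl a) j = if a = j then (1:ℝ) else 0 := fun a => by
        simp [AbM, Matrix.fromRows_apply_inl, Matrix.one_apply]
      have hA2 : ∀ a, AbM N n (Sum.inr a) j = if a = j then (-1:ℝ) else 0 := fun a => by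
        simp only [AbM, Matrix.fromRows_apply_inr, Matrix.of_apply, Sum.elim_inr, Matrix.neg_apply,
          Matrix.one_apply]
        split_ifs <;> simp
      have hs1 : (∑ a, P i (Sum.inl a) * AbM N n (Sum.inl a) j) = μ * max (E i j) 0 := by
        rw [Finset.sum_congr rfl fun a _ => by rw [hA1 a]]
        simp [hPdef, mul_ite, mul_zero, mul_one, Finset.sum_ite_eq']
      have hs2 : (∑ a, P i (Sum.inr a) * AbM N n (Sum.inr a) j) = -(μ * max (-(E i j)) 0) := by
        rw [Finset.sum_congr rfl fun a _ => by rw [hA2 a]]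
        simp [hPdef, mul_ite, mul_neg, mul_zero, mul_one, Finset.sum_ite_eq']
      rw [hs1, hs2]
      have hsm : (μ • E) i j = μ * E i j := rfl
      rw [hsm]
      linear_combination μ * max_sub_max (E i j)
    · intro i
      have hPB : (P *ᵥ BbV N n) i = ∑ j, μ * |E i j| := by
        rw [Matrix.mulVec, dotProduct, Fintype.sum_sum_type]
        simp only [hPdef, BbV, mul_one, Matrix.of_apply, Sum.elim_inl, Sum.elim_inr]
        rw [← Finset.sum_add_distrib]
        refine Finset.sum_congr rfl fun a _ => ?_
        rw [← mul_add, max_add_max]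
      set D : Fin (N + 1) × Fin n → ℝ :=
        fun jc => μ * (if 0 ≤ E i jc then 1 else -1) with hDdef
      set d : ℕ → Fin n → ℝ :=
        fun l c => if h : l + 1 < N + 1 then D (⟨l + 1, h⟩, c) else 0 with hddef
      have hD : ∀ l (h : l < N), (fun c => D (⟨l + 1, Nat.succ_lt_succ h⟩, c)) = d l := by
        intro l h
        funext c
        simp only [hddef]
        rw [dif_pos (Nat.succ_lt_succ h)]
      have hdn : ∀ l, l < N → ‖d l‖ ≤ μ := by
        intro l h
        rw [pi_norm_le_iff_of_nonneg hμ]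
        intro c
        simp only [hddef, hDdef]
        rw [dif_pos (Nat.succ_lt_succ h), Real.norm_eq_abs, abs_mul]
        split_ifs <;> simp [abs_of_nonneg hμ]
      have hkey := (key_iff A B G H α₁ α₂ x hε d D hD).2 (hrob d hdn)
      have hED : (E *ᵥ D) i = ∑ j, μ * |E i j| := by
        rw [Matrix.mulVec, dotProduct]
        refine Finset.sum_congr rfl fun j _ => ?_
        simp only [hDdef]
        rcases le_or_gt 0 (E i j) with h | h
        · rw [if_pos h, abs_of_nonneg h]; ring
        · rw [if_neg (not_le.2 h), abs_of_neg h]; ring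
      calc (P *ᵥ BbV N n) i = (E *ᵥ D) i := by rw [hPB, hED]
        _ ≤ Fcl N A B G H α₁ α₂ x ε i := hkey i
  · rintro ⟨μ, ε, α₁, α₂, P, hμ, hε, hv, hP, hPA, hPB⟩
    refine ⟨μ, ε, α₁, α₂, hμ, hε, hv, ?_⟩
    intro d hd
    classical
    set D : Fin (N + 1) × Fin n → ℝ :=
      fun jc => if h : 1 ≤ (jc.1 : ℕ) then d ((jc.1 : ℕ) - 1) jc.2 else 0 with hDdef
    have hD : ∀ l (h : l < N), (fun c => D (⟨l + 1, Nat.succ_lt_succ h⟩, c)) = d l := by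
      intro l h
      funext c
      show (if h : 1 ≤ l + 1 then d (l + 1 - 1) c else 0) = d l c
      rw [dif_pos (by omega : (1:ℕ) ≤ l + 1)]
      simp
    refine (key_iff A B G H α₁ α₂ x hε d D hD).1 ?_
    have habs : ∀ jc : Fin (N + 1) × Fin n, |D jc| ≤ μ := by
      intro jc
      show |if h : 1 ≤ (jc.1 : ℕ) then d ((jc.1 : ℕ) - 1) jc.2 else 0| ≤ μ
      split_ifs with h
      · have h2 : (jc.1 : ℕ) - 1 < N := by have := jc.1.isLt; omega
        calc |d ((jc.1 : ℕ) - 1) jc.2| ≤ ‖d ((jc.1 : ℕ) - 1)‖ := by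
              rw [← Real.norm_eq_abs]
              exact norm_le_pi_norm _ _
          _ ≤ μ := hd _ h2
      · simpa using hμ
    have h1 : (AbM N n) *ᵥ D ≤ μ • BbV N n := by
      rw [AbM_mulVec]
      rintro (jc | jc)
      · simp only [Sum.elim_inl, Pi.smul_apply, BbV, smul_eq_mul, mul_one]
        exact le_trans (le_abs_self _) (habs jc)
      · simp only [Sum.elim_inr, Pi.neg_apply, Pi.smul_apply, BbV, smul_eq_mul, mul_one]
        exact le_trans (neg_le_abs _) (habs jc)
    have h2 : P *ᵥ ((AbM N n) *ᵥ D) ≤ P *ᵥ (μ • BbV N n) := by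
      intro i
      show ∑ jb, P i jb * ((AbM N n) *ᵥ D) jb ≤ ∑ jb, P i jb * (μ • BbV N n) jb
      exact Finset.sum_le_sum fun jb _ => mul_le_mul_of_nonneg_left (h1 jb) (hP i jb)
    have h3 : μ • (Ecl N A B G α₁ *ᵥ D) ≤ μ • Fcl N A B G H α₁ α₂ x ε := by
      have e1 : P *ᵥ ((AbM N n) *ᵥ D) = μ • (Ecl N A B G α₁ *ᵥ D) := by
        rw [Matrix.mulVec_mulVec, hPA, Matrix.smul_mulVec]
      have e2 : P *ᵥ (μ • BbV N n) = μ • (P *ᵥ BbV N n) := Matrix.mulVec_smul P μ (BbV N n)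
      rw [e1, e2] at h2
      refine le_trans h2 ?_
      intro i
      simp only [Pi.smul_apply, smul_eq_mul]
      exact mul_le_mul_of_nonneg_left (hPB i) hμ
    rcases eq_or_lt_of_le hμ with heq | hpos
    · have hdzero : ∀ l, l < N → d l = 0 := by
        intro l h
        have hh := hd l h
        rw [← heq] at hh
        exact norm_le_zero_iff.1 hh
      have hDzero : D = 0 := by
        funext jc
        show (if h : 1 ≤ (jc.1 : ℕ) then d ((jc.1 : ℕ) - 1) jc.2 else 0) = 0
        split_ifs with h
        · rw [hdzero _ (by have := jc.1.isLt; omega)]; rfl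
        · rfl
      rw [hDzero, Matrix.mulVec_zero]
      intro i
      have hnn : (0:ℝ) ≤ ∑ jb, P i jb * BbV N n jb :=
        Finset.sum_nonneg fun jb _ => mul_nonneg (hP i jb) (by norm_num [BbV])
      exact le_trans hnn (hPB i)
    · intro i
      have hh := h3 i
      simp only [Pi.smul_apply, smul_eq_mul] at hh
      exact le_of_mul_le_mul_left hh hpos
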